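/- arXiv:2602.12736 — 2 statements merged into one kernel-verified Lean document; each statement's English description precedes it below -/
import Mathlib

section
/- In any H-bootstrap process on G with running time τ ≥ 1, there exists an H-chain of length τ: a sequence (Hᵢ, eᵢ) for i ∈ [τ] where each Hᵢ is a copy of H in G_τ, eᵢ ∈ E(Hᵢ) is an edge added at time exactly i, and eᵢ ∈ E(Hᵢ) ∩ E(Hᵢ₊₁) for i < τ. -/
open SimpleGraph Finset

/-- `f` maps `H` to a copy of `H` inside `G`. -/
def IsCopyOf {α V : Type*} (H : SimpleGraph α) (G : SimpleGraph V) (f : α → V) : Prop :=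
  Function.Injective f ∧ ∀ a b, H.Adj a b → G.Adj (f a) (f b)

/-- One round of the `H`-bootstrap process: add every edge whose addition
creates a new copy of `H` (i.e. the edge is the last missing edge of a copy of `H`). -/
def bootStep {α V : Type*} (H : SimpleGraph α) (G : SimpleGraph V) : SimpleGraph V where
  Adj u v := G.Adj u v ∨ (u ≠ v ∧ ∃ f : α → V,
      IsCopyOf H (G ⊔ SimpleGraph.fromEdgeSet {s(u, v)}) f ∧
      ∃ a b, H.Adj a b ∧ f a = u ∧ f b = v)
  symm := by
    constructor
    intro u v h
    rcases h with h | ⟨hne, f, hf, a, b, hab, hfa, hfb⟩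
    · exact Or.inl h.symm
    · refine Or.inr ⟨hne.symm, f, ?_, b, a, hab.symm, hfb, hfa⟩
      rwa [Sym2.eq_swap]
  loopless := by
    constructor
    intro u h
    rcases h with h | ⟨hne, _⟩
    · exact G.irrefl h
    · exact hne rfl

/-- The `H`-bootstrap process on starting graph `G`. -/
def bootProc {α V : Type*} (H : SimpleGraph α) (G : SimpleGraph V) : ℕ → SimpleGraph V
  | 0 => G
  | (n + 1) => bootStep H (bootProc H G n)

/-- The running time of the `H`-process on `G`: the least `t` with `G_{t+1} = G_t`. -/
noncomputable def bootRunTime {α V : Type*} (H : SimpleGraph α) (G : SimpleGraph V) : ℕ :=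
  sInf {t | bootProc H G (t + 1) = bootProc H G t}

/-- The final (stabilised) graph of the `H`-process on `G`. -/
noncomputable def bootFinal {α V : Type*} (H : SimpleGraph α) (G : SimpleGraph V) :
    SimpleGraph V :=
  bootProc H G (bootRunTime H G)

lemma le_bootStep {α V : Type*} (H : SimpleGraph α) (G : SimpleGraph V) :
    G ≤ bootStep H G := fun _ _ h => Or.inl h

lemma bootProc_mono {α V : Type*} (H : SimpleGraph α) (G : SimpleGraph V) :
    Monotone (bootProc H G) := by
  apply monotone_nat_of_le_succ
  intro n
  exact le_bootStep H (bootProc H G n)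

lemma fromEdgeSet_single_le {V : Type*} {G : SimpleGraph V} {e : Sym2 V}
    (he : e ∈ G.edgeSet) : SimpleGraph.fromEdgeSet {e} ≤ G := by
  intro u v h
  rw [SimpleGraph.fromEdgeSet_adj] at h
  rcases h with ⟨h1, _⟩
  rw [Set.mem_singleton_iff] at h1
  subst h1
  exact he

/-- Extract a witnessing copy for an edge added in one boot step. -/
lemma extract_witness {α V : Type*} (H : SimpleGraph α) (K : SimpleGraph V) (e : Sym2 V)
    (h1 : e ∈ (bootStep H K).edgeSet) (h2 : e ∉ K.edgeSet) :
    ∃ f : α → V, IsCopyOf H (K ⊔ SimpleGraph.fromEdgeSet {e}) f ∧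
      ∃ a b, H.Adj a b ∧ e = s(f a, f b) := by
  induction e using Sym2.ind with
  | _ u v =>
    rw [SimpleGraph.mem_edgeSet] at h1 h2
    rcases h1 with h | ⟨hne, f, hf, a, b, hab, ha, hb⟩
    · exact absurd h h2
    · exact ⟨f, hf, a, b, hab, by rw [ha, hb]⟩

/-- If a copy of `H` in `G_{k+1} ⊔ {e}` witnesses the addition of `e` at time `k+2`
(so `e ∉ G_{k+1}`), then some edge of the copy lies in `G_{k+1} \ G_k`. -/
lemma step_down {α V : Type*} (H : SimpleGraph α) (G : SimpleGraph V) (k : ℕ)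
    (f : α → V) (e : Sym2 V)
    (hf : IsCopyOf H (bootProc H G (k + 1) ⊔ SimpleGraph.fromEdgeSet {e}) f)
    (he : ∃ a b, H.Adj a b ∧ e = s(f a, f b))
    (hnot : e ∉ (bootProc H G (k + 1)).edgeSet) :
    ∃ a b, H.Adj a b ∧ s(f a, f b) ∈ (bootProc H G (k + 1)).edgeSet ∧
      s(f a, f b) ∉ (bootProc H G k).edgeSet := by
  by_contra hcon
  push_neg at hcon
  obtain ⟨a, b, hab, heq⟩ := he
  -- f is in fact a copy into G_k ⊔ {e}
  have hf' : IsCopyOf H (bootProc H G k ⊔ SimpleGraph.fromEdgeSet {e}) f := by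
    refine ⟨hf.1, fun c d hcd => ?_⟩
    rcases hf.2 c d hcd with h | h
    · exact Or.inl ((hcon c d hcd) ((SimpleGraph.mem_edgeSet _).mpr h))
    · exact Or.inr h
  have hne : f a ≠ f b := ((hf.2 a b hab)).ne
  have : (bootStep H (bootProc H G k)).Adj (f a) (f b) := by
    refine Or.inr ⟨hne, f, ?_, a, b, hab, rfl, rfl⟩
    rwa [← heq]
  exact hnot (by rw [heq]; exact (SimpleGraph.mem_edgeSet _).mpr this)

/-- A witness that `e` was added at time exactly `i` via the copy `f`. -/
def Wit {α V : Type*} (H : SimpleGraph α) (G : SimpleGraph V) (i : ℕ)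
    (f : α → V) (e : Sym2 V) : Prop :=
  IsCopyOf H (bootProc H G (i - 1) ⊔ SimpleGraph.fromEdgeSet {e}) f ∧
  (∃ a b, H.Adj a b ∧ e = s(f a, f b)) ∧
  e ∈ (bootProc H G i).edgeSet ∧ e ∉ (bootProc H G (i - 1)).edgeSet

lemma chain_aux {α V : Type*} (H : SimpleGraph α) (G : SimpleGraph V) (τ : ℕ) (hτ : 1 ≤ τ)
    (hst : bootProc H G τ ≠ bootProc H G (τ - 1)) :
    ∀ n j, j + n = τ → 1 ≤ j →
      ∃ (f : ℕ → α → V) (e : ℕ → Sym2 V),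
        (∀ i ∈ Finset.Icc j τ, Wit H G i (f i) (e i)) ∧
        (∀ i ∈ Finset.Icc j τ, i < τ →
          ∃ a b, H.Adj a b ∧ e i = s(f (i + 1) a, f (i + 1) b)) := by
  intro n
  induction n with
  | zero =>
    intro j hj _
    simp only [Nat.add_zero] at hj
    subst hj
    -- find an edge added at time τ
    have hle : (bootProc H G (j - 1)).edgeSet ⊆ (bootProc H G j).edgeSet :=
      SimpleGraph.edgeSet_mono (bootProc_mono H G (Nat.sub_le j 1))
    have hne : (bootProc H G (j - 1)).edgeSet ≠ (bootProc H G j).edgeSet := by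
      intro h
      exact hst (SimpleGraph.edgeSet_inj.mp h.symm)
    obtain ⟨e₀, he₀, he₀'⟩ := Set.exists_of_ssubset (HasSubset.Subset.ssubset_of_ne hle hne)
    have hjeq : j - 1 + 1 = j := Nat.succ_pred_eq_of_pos hτ
    have hbs : bootProc H G j = bootStep H (bootProc H G (j - 1)) := by
      conv_lhs => rw [← hjeq]
      rfl
    obtain ⟨f₀, hf₀, hedge₀⟩ := extract_witness H (bootProc H G (j - 1)) e₀
      (by rw [← hbs]; exact he₀) he₀'
    refine ⟨fun _ => f₀, fun _ => e₀, ?_, ?_⟩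
    · intro i hi
      rw [Finset.mem_Icc] at hi
      have : i = j := le_antisymm hi.2 hi.1
      subst this
      exact ⟨hf₀, hedge₀, he₀, he₀'⟩
    · intro i hi hlt
      rw [Finset.mem_Icc] at hi
      omega
  | succ n ih =>
    intro j hj hj1
    obtain ⟨f, e, hW, hL⟩ := ih (j + 1) (by omega) (by omega)
    have hjτ : j + 1 ≤ τ := by omega
    have hWj1 := hW (j + 1) (Finset.mem_Icc.mpr ⟨le_refl _, hjτ⟩)
    obtain ⟨hcopy, hedge, hmem, hnmem⟩ := hWj1
    simp only [Nat.add_sub_cancel] at hcopy hnmem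
    have hjeq : j - 1 + 1 = j := Nat.succ_pred_eq_of_pos hj1
    -- find an edge of the copy f (j+1) added at time exactly j
    obtain ⟨a, b, hab, hin, hout⟩ := step_down H G (j - 1) (f (j + 1)) (e (j + 1))
      (by rwa [hjeq]) hedge (by rwa [hjeq])
    rw [hjeq] at hin
    -- extract a witness copy at time j
    have hbs : bootProc H G j = bootStep H (bootProc H G (j - 1)) := by
      conv_lhs => rw [← hjeq]
      rfl
    obtain ⟨f', hf', hedge'⟩ := extract_witness H (bootProc H G (j - 1))
      (s(f (j + 1) a, f (j + 1) b)) (by rw [← hbs]; exact hin) hout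
    refine ⟨Function.update f j f', Function.update e j (s(f (j + 1) a, f (j + 1) b)), ?_, ?_⟩
    · intro i hi
      rw [Finset.mem_Icc] at hi
      rcases eq_or_lt_of_le hi.1 with rfl | hlt
      · rw [Function.update_self, Function.update_self]
        exact ⟨hf', hedge', hin, hout⟩
      · rw [Function.update_of_ne (by omega), Function.update_of_ne (by omega)]
        exact hW i (Finset.mem_Icc.mpr ⟨hlt, hi.2⟩)
    · intro i hi hilt
      rw [Finset.mem_Icc] at hi
      rcases eq_or_lt_of_le hi.1 with rfl | hlt
      · rw [Function.update_self, Function.update_of_ne (by omega)]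
        exact ⟨a, b, hab, rfl⟩
      · rw [Function.update_of_ne (by omega), Function.update_of_ne (by omega)]
        exact hL i (Finset.mem_Icc.mpr ⟨hlt, hi.2⟩) hilt

/-- In any `H`-process with running time `τ ≥ 1` there is an `H`-chain of length `τ`:
copies `Hᵢ` of `H` in `G_τ` (given by injective homomorphisms `f i`) together with
edges `e i ∈ E(Hᵢ)` added at time exactly `i`, with `e i ∈ E(Hᵢ) ∩ E(Hᵢ₊₁)` for `i < τ`. -/
theorem stmt_9 {α V : Type*} (H : SimpleGraph α) (G : SimpleGraph V)
    (τ : ℕ) (hτ : 1 ≤ τ) (hrun : bootRunTime H G = τ) :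
    ∃ (f : ℕ → α → V) (e : ℕ → Sym2 V),
      ∀ i ∈ Finset.Icc 1 τ,
        (Function.Injective (f i) ∧
          ∀ a b, H.Adj a b → (bootProc H G τ).Adj (f i a) (f i b)) ∧
        (∃ a b, H.Adj a b ∧ e i = s(f i a, f i b)) ∧
        e i ∈ (bootProc H G i).edgeSet ∧
        e i ∉ (bootProc H G (i - 1)).edgeSet ∧
        (i < τ → ∃ a b, H.Adj a b ∧ e i = s(f (i + 1) a, f (i + 1) b)) := by
  -- the process has not stabilised at time τ - 1
  have hst : bootProc H G τ ≠ bootProc H G (τ - 1) := by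
    have hrun' : sInf {t | bootProc H G (t + 1) = bootProc H G t} = τ := hrun
    have hlt : τ - 1 < sInf {t | bootProc H G (t + 1) = bootProc H G t} := by
      rw [hrun']; omega
    have h1 := Nat.notMem_of_lt_sInf hlt
    simp only [Set.mem_setOf_eq] at h1
    have h2 : τ - 1 + 1 = τ := by omega
    rw [h2] at h1
    exact h1
  obtain ⟨f, e, hW, hL⟩ := chain_aux H G τ hτ hst (τ - 1) 1 (by omega) (le_refl 1)
  refine ⟨f, e, ?_⟩
  intro i hi
  have hi' := Finset.mem_Icc.mp hi
  obtain ⟨⟨hinj, hhom⟩, hedge, hmem, hnmem⟩ := hW i hi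
  refine ⟨⟨hinj, fun a b hab => ?_⟩, hedge, hmem, hnmem, fun hlt => hL i hi hlt⟩
  -- the copy at time i lives in G_τ
  have h1 : bootProc H G (i - 1) ≤ bootProc H G τ := bootProc_mono H G (by omega)
  have h2 : SimpleGraph.fromEdgeSet {e i} ≤ bootProc H G τ :=
    fromEdgeSet_single_le (SimpleGraph.edgeSet_mono (bootProc_mono H G hi'.2) hmem)
  exact sup_le h1 h2 (hhom a b hab)
end

section
/- Let k ≥ 3 and let K_k⁺ be the graph formed by adding a pendant edge to a clique of size k (so K_k⁺ has k+1 vertices). Then M_{K_k⁺}(n) ≤ 3 for all n. -/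
open SimpleGraph Finset

/-- `K_k⁺`: a clique on the vertices `0, …, k-1` of `Fin (k+1)` together with a pendant
vertex `k` attached to the vertex `0`. -/
def cliquePlusPendant (k : ℕ) : SimpleGraph (Fin (k + 1)) where
  Adj u v := u ≠ v ∧
    ((u.val < k ∧ v.val < k) ∨ (u.val = k ∧ v.val = 0) ∨ (u.val = 0 ∧ v.val = k))
  symm := by
    constructor
    intro u v h
    obtain ⟨hne, h2⟩ := h
    exact ⟨hne.symm, by tauto⟩
  loopless := ⟨fun u h => h.1 rfl⟩


lemma bootStep_top {α V : Type*} (H : SimpleGraph α) :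
    bootStep H (⊤ : SimpleGraph V) = ⊤ :=
  le_antisymm le_top (le_bootStep H ⊤)

lemma key_lemma {k n : ℕ} (hk : 3 ≤ k) (G₁ : SimpleGraph (Fin n))
    (f : Fin (k+1) → Fin n) (hf : IsCopyOf (cliquePlusPendant k) G₁ f) :
    bootStep (cliquePlusPendant k) (bootStep (cliquePlusPendant k) G₁) = ⊤ := by
  have hlast : (Fin.last k).val = k := rfl
  have hzero : ((0 : Fin (k+1))).val = 0 := rfl
  have hne_last : ∀ i : Fin (k+1), i ≠ Fin.last k ↔ i.val < k := by
    intro i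
    rw [Ne, Fin.ext_iff, hlast]
    have := i.isLt
    omega
  have h0last : (0 : Fin (k+1)) ≠ Fin.last k := (hne_last 0).2 (by omega)
  have claim1 : ∀ j : Fin (k+1), j.val < k → ∀ v : Fin n, v ≠ f j →
      (bootStep (cliquePlusPendant k) G₁).Adj (f j) v := by
    intro j hj v hv
    by_cases hvU : ∃ i : Fin (k+1), i.val < k ∧ f i = v
    · obtain ⟨i, hi, rfl⟩ := hvU
      exact Or.inl (hf.2 j i ⟨fun h => hv (by rw [h]), Or.inl ⟨hj, hi⟩⟩)
    · push_neg at hvU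
      refine Or.inr ⟨fun h => hv h.symm, ?_⟩
      have hσval : ∀ i : Fin (k+1), i.val < k → ((Equiv.swap (0 : Fin (k+1)) j) i).val < k := by
        intro i hi
        rcases eq_or_ne i 0 with rfl | h0
        · rw [Equiv.swap_apply_left]; exact hj
        · rcases eq_or_ne i j with rfl | hij
          · rw [Equiv.swap_apply_right]; omega
          · rw [Equiv.swap_apply_of_ne_of_ne h0 hij]; exact hi
      refine ⟨fun i => if i = Fin.last k then v else f ((Equiv.swap (0 : Fin (k+1)) j) i),
        ⟨?_, ?_⟩, 0, Fin.last k, ⟨h0last, Or.inr (Or.inr ⟨hzero, hlast⟩)⟩, ?_, ?_⟩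
      · intro i₁ i₂ h
        simp only at h
        by_cases h1 : i₁ = Fin.last k
        · by_cases h2 : i₂ = Fin.last k
          · rw [h1, h2]
          · rw [if_pos h1, if_neg h2] at h
            exact absurd h.symm (hvU _ (hσval i₂ ((hne_last i₂).1 h2)))
        · by_cases h2 : i₂ = Fin.last k
          · rw [if_neg h1, if_pos h2] at h
            exact absurd h (hvU _ (hσval i₁ ((hne_last i₁).1 h1)))
          · rw [if_neg h1, if_neg h2] at h
            exact (Equiv.swap (0 : Fin (k+1)) j).injective (hf.1 h)
      · intro a b hab
        obtain ⟨hne, hc⟩ := hab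
        simp only
        rcases hc with ⟨ha, hb⟩ | ⟨ha, hb⟩ | ⟨ha, hb⟩
        · have ha' : a ≠ Fin.last k := (hne_last a).2 ha
          have hb' : b ≠ Fin.last k := (hne_last b).2 hb
          rw [if_neg ha', if_neg hb']
          exact Or.inl (hf.2 _ _ ⟨fun h => hne ((Equiv.swap (0 : Fin (k+1)) j).injective h),
            Or.inl ⟨hσval a ha, hσval b hb⟩⟩)
        · have ha' : a = Fin.last k := Fin.ext (by rw [ha, hlast])
          have hb' : b ≠ Fin.last k := (hne_last b).2 (by omega)
          rw [ha', if_pos rfl, if_neg hb']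
          have hb0 : b = 0 := Fin.ext (by rw [hb, hzero])
          rw [hb0, Equiv.swap_apply_left]
          refine Or.inr ?_
          rw [SimpleGraph.fromEdgeSet_adj]
          exact ⟨by rw [Sym2.eq_swap]; rfl, hv⟩
        · have hb' : b = Fin.last k := Fin.ext (by rw [hb, hlast])
          have ha' : a ≠ Fin.last k := (hne_last a).2 (by omega)
          rw [hb', if_pos rfl, if_neg ha']
          have ha0 : a = 0 := Fin.ext (by rw [ha, hzero])
          rw [ha0, Equiv.swap_apply_left]
          refine Or.inr ?_
          rw [SimpleGraph.fromEdgeSet_adj]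
          exact ⟨rfl, hv.symm⟩
      · simp only [if_neg h0last, Equiv.swap_apply_left]
      · simp only [if_pos]
  apply le_antisymm le_top
  intro x y hxy
  rw [SimpleGraph.top_adj] at hxy
  show (bootStep (cliquePlusPendant k) (bootStep (cliquePlusPendant k) G₁)).Adj x y
  by_cases hx : ∃ j : Fin (k+1), j.val < k ∧ f j = x
  · obtain ⟨j, hj, rfl⟩ := hx
    exact Or.inl (claim1 j hj y (Ne.symm hxy))
  · by_cases hy : ∃ j : Fin (k+1), j.val < k ∧ f j = y
    · obtain ⟨j, hj, rfl⟩ := hy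
      exact Or.inl ((claim1 j hj x hxy).symm)
    · push_neg at hx hy
      have hlast0 : (Fin.last k) ≠ (0 : Fin (k+1)) := by
        rw [Ne, Fin.ext_iff, hlast, hzero]; omega
      refine Or.inr ⟨hxy, fun i => if i = 0 then x else if i = Fin.last k then y else f i,
        ⟨?_, ?_⟩, 0, Fin.last k, ⟨h0last, Or.inr (Or.inr ⟨hzero, hlast⟩)⟩, if_pos rfl, ?_⟩
      · intro i₁ i₂ h
        simp only at h
        by_cases h10 : i₁ = 0
        · by_cases h20 : i₂ = 0
          · rw [h10, h20]
          · rw [if_pos h10, if_neg h20] at h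
            by_cases h2l : i₂ = Fin.last k
            · rw [if_pos h2l] at h; exact absurd h hxy
            · rw [if_neg h2l] at h
              exact absurd h.symm (hx i₂ ((hne_last i₂).1 h2l))
        · by_cases h20 : i₂ = 0
          · rw [if_neg h10, if_pos h20] at h
            by_cases h1l : i₁ = Fin.last k
            · rw [if_pos h1l] at h; exact absurd h.symm hxy
            · rw [if_neg h1l] at h
              exact absurd h (hx i₁ ((hne_last i₁).1 h1l))
          · rw [if_neg h10, if_neg h20] at h
            by_cases h1l : i₁ = Fin.last k
            · by_cases h2l : i₂ = Fin.last k
              · rw [h1l, h2l]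
              · rw [if_pos h1l, if_neg h2l] at h
                exact absurd h.symm (hy i₂ ((hne_last i₂).1 h2l))
            · by_cases h2l : i₂ = Fin.last k
              · rw [if_neg h1l, if_pos h2l] at h
                exact absurd h (hy i₁ ((hne_last i₁).1 h1l))
              · rw [if_neg h1l, if_neg h2l] at h
                exact hf.1 h
      · intro a b hab
        obtain ⟨hne, hc⟩ := hab
        simp only
        rcases hc with ⟨ha, hb⟩ | ⟨ha, hb⟩ | ⟨ha, hb⟩
        · have ha' : a ≠ Fin.last k := (hne_last a).2 ha
          have hb' : b ≠ Fin.last k := (hne_last b).2 hb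
          by_cases ha0 : a = 0
          · have hb0 : b ≠ 0 := fun h => hne (by rw [ha0, h])
            rw [if_pos ha0, if_neg hb0, if_neg hb']
            exact Or.inl ((claim1 b hb x (Ne.symm (hx b hb))).symm)
          · by_cases hb0 : b = 0
            · rw [if_neg ha0, if_pos hb0, if_neg ha']
              exact Or.inl (claim1 a ha x (Ne.symm (hx a ha)))
            · rw [if_neg ha0, if_neg hb0, if_neg ha', if_neg hb']
              exact Or.inl (le_bootStep _ G₁ (hf.2 a b ⟨hne, Or.inl ⟨ha, hb⟩⟩))
        · have ha' : a = Fin.last k := Fin.ext (by rw [ha, hlast])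
          have hb0 : b = 0 := Fin.ext (by rw [hb, hzero])
          rw [ha', hb0, if_neg hlast0, if_pos rfl, if_pos rfl]
          refine Or.inr ?_
          rw [SimpleGraph.fromEdgeSet_adj]
          exact ⟨by rw [Sym2.eq_swap]; rfl, Ne.symm hxy⟩
        · have hb' : b = Fin.last k := Fin.ext (by rw [hb, hlast])
          have ha0 : a = 0 := Fin.ext (by rw [ha, hzero])
          rw [ha0, hb', if_pos rfl, if_neg hlast0, if_pos rfl]
          refine Or.inr ?_
          rw [SimpleGraph.fromEdgeSet_adj]
          exact ⟨rfl, hxy⟩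
      · simp only [if_neg hlast0, if_pos]

/-- For `k ≥ 3`, the `K_k⁺`-bootstrap process on any `n`-vertex graph stabilises within
3 rounds: `M_{K_k⁺}(n) ≤ 3`. -/
theorem stmt_14 (k : ℕ) (hk : 3 ≤ k) (n : ℕ) (G : SimpleGraph (Fin n)) :
    bootRunTime (cliquePlusPendant k) G ≤ 3 := by
  have h3mem : bootProc (cliquePlusPendant k) G 4 = bootProc (cliquePlusPendant k) G 3 := by
    by_cases h : bootStep (cliquePlusPendant k) G = G
    · have hall : ∀ t, bootProc (cliquePlusPendant k) G t = G := by
        intro t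
        induction t with
        | zero => rfl
        | succ t ih => show bootStep _ _ = G; rw [ih, h]
      rw [hall 4, hall 3]
    · have hedge : ∃ u v, (bootStep (cliquePlusPendant k) G).Adj u v ∧ ¬ G.Adj u v := by
        by_contra hc
        push_neg at hc
        exact h (le_antisymm (fun u v ha => hc u v ha) (le_bootStep _ _))
      obtain ⟨u, v, hadj, hGadj⟩ := hedge
      have hadj' := hadj
      rcases hadj with h' | ⟨hne, f, hcopy, -⟩
      · exact absurd h' hGadj
      · have hle : G ⊔ SimpleGraph.fromEdgeSet {s(u, v)} ≤ bootStep (cliquePlusPendant k) G := by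
          refine sup_le (le_bootStep _ _) ?_
          intro a b hab
          rw [SimpleGraph.fromEdgeSet_adj] at hab
          obtain ⟨hmem, hab_ne⟩ := hab
          rw [Set.mem_singleton_iff, Sym2.eq_iff] at hmem
          rcases hmem with ⟨rfl, rfl⟩ | ⟨rfl, rfl⟩
          · exact hadj'
          · exact hadj'.symm
        have hcopy' : IsCopyOf (cliquePlusPendant k) (bootStep (cliquePlusPendant k) G) f :=
          ⟨hcopy.1, fun a b hab => hle (hcopy.2 a b hab)⟩
        have h3 : bootProc (cliquePlusPendant k) G 3 = ⊤ := by
          show bootStep (cliquePlusPendant k) (bootStep (cliquePlusPendant k)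
            (bootStep (cliquePlusPendant k) G)) = ⊤
          exact key_lemma hk _ f hcopy'
        show bootStep (cliquePlusPendant k) (bootProc (cliquePlusPendant k) G 3) = _
        rw [h3, bootStep_top]
  exact Nat.sInf_le h3mem
end
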